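/- arXiv:0710.0164 — 2 statements merged into one kernel-verified Lean document; each statement's English description precedes it below -/
import Mathlib

section
/- For x, y ∈ ℂ^{n+1}, the endomorphisms m(x) and m(y) are equal if and only if there exists c ∈ ℂ with |c| = 1 such that x = c · y. -/
open Complex

/-- The standard hermitian form of signature `(n,1)` on `ℂ^{n+1}`. -/
noncomputable def hForm (n : ℕ) (x y : Fin (n+1) → ℂ) : ℂ :=
  (∑ i : Fin n, x i.castSucc * (starRingEnd ℂ) (y i.castSucc))
    - x (Fin.last n) * (starRingEnd ℂ) (y (Fin.last n))

/-- The real part `g = Re h`. -/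
noncomputable def gForm (n : ℕ) (x y : Fin (n+1) → ℂ) : ℝ := (hForm n x y).re

/-- `m(x) = x ∧ Jx`, i.e. `(x ∧ Jx) z = g(x,z)·Jx − g(Jx,z)·x`. -/
noncomputable def mFun (n : ℕ) (x z : Fin (n+1) → ℂ) : Fin (n+1) → ℂ :=
  gForm n x z • (Complex.I • x) - gForm n (Complex.I • x) z • x

lemma hForm_smul_left (n : ℕ) (a : ℂ) (x z : Fin (n+1) → ℂ) :
    hForm n (a • x) z = a * hForm n x z := by
  simp [hForm, Finset.mul_sum, mul_sub, mul_assoc]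

lemma mFun_eq (n : ℕ) (x z : Fin (n+1) → ℂ) :
    mFun n x z = (Complex.I * (starRingEnd ℂ) (hForm n x z)) • x := by
  funext j
  have h1 : hForm n (Complex.I • x) z = Complex.I * hForm n x z := hForm_smul_left n _ x z
  simp only [mFun, gForm, h1, Pi.sub_apply, Pi.smul_apply, smul_eq_mul, Complex.real_smul]
  set h := hForm n x z
  apply Complex.ext <;> simp [Complex.mul_re, Complex.mul_im] <;> ring

lemma hForm_single_ne (n : ℕ) (y : Fin (n+1) → ℂ) (i : Fin (n+1)) (hy : y i ≠ 0) :
    hForm n y (Pi.single i 1) ≠ 0 := by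
  induction i using Fin.lastCases with
  | last =>
      have : hForm n y (Pi.single (Fin.last n) 1) = - y (Fin.last n) := by
        simp [hForm, Pi.single_apply, apply_ite, (Fin.castSucc_lt_last _).ne]
      simpa [this] using hy
  | cast k =>
      have : hForm n y (Pi.single k.castSucc 1) = y k.castSucc := by
        simp [hForm, Pi.single_apply, apply_ite, (Fin.castSucc_lt_last _).ne',
          Fin.castSucc_inj]
      simpa [this] using hy

lemma mFun_smul (n : ℕ) (a : ℂ) (y z : Fin (n+1) → ℂ) :
    mFun n (a • y) z = (Complex.normSq a : ℂ) • mFun n y z := by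
  rw [mFun_eq, mFun_eq, hForm_smul_left, smul_smul]
  rw [map_mul]
  rw [show Complex.I * ((starRingEnd ℂ) a * (starRingEnd ℂ) (hForm n y z)) * a
      = (a * (starRingEnd ℂ) a) * (Complex.I * (starRingEnd ℂ) (hForm n y z)) by ring,
    Complex.mul_conj]
  rw [mul_smul]

/-- `m(x) = m(y)` iff `x = c·y` for some complex unit `c`. -/
theorem mFun_eq_iff_unit_multiple (n : ℕ) (hn : 1 ≤ n) (x y : Fin (n+1) → ℂ) :
    (∀ z : Fin (n+1) → ℂ, mFun n x z = mFun n y z) ↔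
      ∃ c : ℂ, ‖c‖ = 1 ∧ x = c • y := by
  constructor
  · intro H
    by_cases hx : x = 0
    · subst hx
      refine ⟨1, by simp, ?_⟩
      by_contra hy0
      have hy : y ≠ 0 := by intro h; exact hy0 (by simp [h])
      obtain ⟨i, hyi⟩ := Function.ne_iff.mp hy
      have hz := (H (Pi.single i 1)).symm
      rw [mFun_eq, mFun_eq] at hz
      have := congrFun hz i
      simp only [Pi.smul_apply, smul_eq_mul, Pi.zero_apply, mul_zero] at this
      have hne : hForm n y (Pi.single i 1) ≠ 0 := hForm_single_ne n y i (by simpa using hyi)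
      exact (mul_ne_zero (mul_ne_zero Complex.I_ne_zero (by simpa using hne))
        (by simpa using hyi)) this
    · obtain ⟨i, hxi⟩ := Function.ne_iff.mp hx
      have hxi : x i ≠ 0 := by simpa using hxi
      set z : Fin (n+1) → ℂ := Pi.single i 1 with hzdef
      have hhx : hForm n x z ≠ 0 := hForm_single_ne n x i hxi
      have Hz := H z
      rw [mFun_eq, mFun_eq] at Hz
      set α := Complex.I * (starRingEnd ℂ) (hForm n x z) with hα
      set β := Complex.I * (starRingEnd ℂ) (hForm n y z) with hβ
      have hαne : α ≠ 0 :=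
        mul_ne_zero Complex.I_ne_zero (by simpa using hhx)
      have hxay : x = (α⁻¹ * β) • y := by
        funext j
        have := congrFun Hz j
        simp only [Pi.smul_apply, smul_eq_mul] at this ⊢
        field_simp
        linear_combination this
      set a := α⁻¹ * β with hadef
      have hyi : y i ≠ 0 := by
        intro h
        apply hxi
        rw [hxay]; simp [h]
      have key := H z
      rw [hxay, mFun_smul] at key
      have hmyz : mFun n y z i ≠ 0 := by
        rw [mFun_eq]
        simp only [Pi.smul_apply, smul_eq_mul]
        refine mul_ne_zero (mul_ne_zero Complex.I_ne_zero ?_) hyi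
        simpa using hForm_single_ne n y i hyi
      have h1 : (Complex.normSq a : ℂ) = 1 := by
        have := congrFun key i
        simp only [Pi.smul_apply, smul_eq_mul] at this
        exact mul_right_cancel₀ hmyz (this.trans (one_mul _).symm)
      refine ⟨a, ?_, hxay⟩
      have h2 : Complex.normSq a = 1 := by exact_mod_cast h1
      rw [Complex.norm_def, h2, Real.sqrt_one]
  · rintro ⟨c, hc, rfl⟩
    intro z
    rw [mFun_smul]
    have : Complex.normSq c = 1 := by
      rw [← Complex.sq_norm, hc, one_pow]
    rw [this]; simp
end

section
/- Suppose there exists x₀ ∈ ℂ^{n} with g(x₀,x₀) = 1 such that R_ρ(x₀, Jx₀) = 0 as an ℝ-linear endomorphism of ℂ^{n}. Then ρ = 0. (This is the algebraic content of the lemma that a Bochner–Kähler metric whose curvature annihilates some pair (X₀, JX₀) with X₀ nonvanishing is flat.) -/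
open Complex

/-- The standard positive definite hermitian inner product on `ℂ^n`
(`ℂ`-linear in the first argument). -/
noncomputable def innerC (n : ℕ) (x y : Fin n → ℂ) : ℂ :=
  ∑ i : Fin n, x i * (starRingEnd ℂ) (y i)

/-- Its real part `g = Re⟪·,·⟫`. -/
noncomputable def gR (n : ℕ) (x y : Fin n → ℂ) : ℝ := (innerC n x y).re

/-- The wedge `(u ∧ v) Z = g(u,Z)·v − g(v,Z)·u`. -/
noncomputable def wedgeR (n : ℕ) (u v Z : Fin n → ℂ) : Fin n → ℂ :=
  gR n u Z • v - gR n v Z • u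

/-- The Bochner–Kähler curvature operator
`R_ρ(X,Y)Z = 2g(X,JY)ρZ + 2g(X,ρY)JZ + (ρY∧JX)Z − (ρX∧JY)Z
+ (X∧JρY)Z − (Y∧JρX)Z`, where `J` is multiplication by `i`. -/
noncomputable def Rcurv (n : ℕ) (ρ : (Fin n → ℂ) →ₗ[ℂ] (Fin n → ℂ))
    (X Y Z : Fin n → ℂ) : Fin n → ℂ :=
  (2 * gR n X (Complex.I • Y)) • ρ Z + (2 * gR n X (ρ Y)) • (Complex.I • Z)
    + wedgeR n (ρ Y) (Complex.I • X) Z - wedgeR n (ρ X) (Complex.I • Y) Z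
    + wedgeR n X (Complex.I • ρ Y) Z - wedgeR n Y (Complex.I • ρ X) Z

lemma innerC_conj (n : ℕ) (x y : Fin n → ℂ) :
    innerC n x y = (starRingEnd ℂ) (innerC n y x) := by
  simp [innerC, map_sum, mul_comm]

lemma innerC_smul_left (n : ℕ) (c : ℂ) (x y : Fin n → ℂ) :
    innerC n (c • x) y = c * innerC n x y := by
  simp [innerC, Finset.mul_sum, mul_assoc]

lemma innerC_smul_right (n : ℕ) (c : ℂ) (x y : Fin n → ℂ) :
    innerC n x (c • y) = (starRingEnd ℂ) c * innerC n x y := by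
  simp [innerC, Finset.mul_sum]
  exact Finset.sum_congr rfl fun i _ => by ring

lemma innerC_neg_left (n : ℕ) (x y : Fin n → ℂ) : innerC n (-x) y = -innerC n x y := by
  simp [innerC]

lemma innerC_neg_right (n : ℕ) (x y : Fin n → ℂ) : innerC n x (-y) = -innerC n x y := by
  simp [innerC]

lemma innerC_zero_left (n : ℕ) (y : Fin n → ℂ) : innerC n 0 y = 0 := by simp [innerC]
lemma innerC_zero_right (n : ℕ) (x : Fin n → ℂ) : innerC n x 0 = 0 := by simp [innerC]

lemma gR_I_right (n : ℕ) (x y : Fin n → ℂ) :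
    gR n x (Complex.I • y) = (innerC n x y).im := by
  simp [gR, innerC_smul_right, Complex.conj_I]

lemma gR_I_left (n : ℕ) (x y : Fin n → ℂ) :
    gR n (Complex.I • x) y = -(innerC n x y).im := by
  simp [gR, innerC_smul_left]

lemma real_smul_vec (n : ℕ) (r : ℝ) (v : Fin n → ℂ) : r • v = ((r : ℂ)) • v := by
  funext i; simp [Complex.real_smul]

/-- if a skew-hermitian `ρ ∈ u(n)` satisfies
`R_ρ(x₀, Jx₀) = 0` for some unit vector `x₀`, then `ρ = 0` (a Bochner–Kähler
metric whose curvature annihilates some pair `(X₀, JX₀)` is flat). -/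
theorem rho_eq_zero_of_curv_vanishes (n : ℕ) (hn : 1 ≤ n)
    (ρ : (Fin n → ℂ) →ₗ[ℂ] (Fin n → ℂ))
    (hρ : ∀ x y : Fin n → ℂ, innerC n (ρ x) y + innerC n x (ρ y) = 0)
    (x₀ : Fin n → ℂ) (hx₀ : gR n x₀ x₀ = 1)
    (hR : ∀ Z : Fin n → ℂ, Rcurv n ρ x₀ (Complex.I • x₀) Z = 0) :
    ρ = 0 := by
  have hXX : innerC n x₀ x₀ = 1 := by
    have h := innerC_conj n x₀ x₀
    have him : (innerC n x₀ x₀).im = 0 := by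
      have h2 := congrArg Complex.im h
      simp at h2
      linarith
    apply Complex.ext
    · exact hx₀
    · simpa using him
  set c := innerC n x₀ (ρ x₀) with hc
  have hcre : c.re = 0 := by
    have h := hρ x₀ x₀
    rw [innerC_conj n (ρ x₀) x₀] at h
    have h2 := congrArg Complex.re h
    simp at h2
    linarith
  have e1 : Complex.I • Complex.I • x₀ = -x₀ := by
    rw [smul_smul, Complex.I_mul_I, neg_one_smul]
  have e2 : ρ (Complex.I • x₀) = Complex.I • ρ x₀ := map_smul ρ _ _
  have e3 : Complex.I • Complex.I • ρ x₀ = -(ρ x₀) := by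
    rw [smul_smul, Complex.I_mul_I, neg_one_smul]
  have g1 : gR n x₀ (-x₀) = -1 := by simp [gR, innerC_neg_right, hXX]
  have g2 : gR n x₀ (Complex.I • ρ x₀) = c.im := by rw [gR_I_right, ← hc]
  have g3 : gR n (Complex.I • ρ x₀) x₀ = c.im := by
    rw [gR_I_left, innerC_conj n (ρ x₀) x₀, ← hc]; simp
  have g4 : gR n (ρ x₀) x₀ = 0 := by
    simp [gR, innerC_conj n (ρ x₀) x₀, ← hc, hcre]
  have g5 : gR n (Complex.I • x₀) x₀ = 0 := by simp [gR_I_left, hXX]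
  have g7 : gR n (-x₀) x₀ = -1 := by simp [gR, innerC_neg_left, hXX]
  have g8 : gR n (-(ρ x₀)) x₀ = 0 := by
    simp [gR, innerC_neg_left, innerC_conj n (ρ x₀) x₀, ← hc, hcre]
  have h1 := hR x₀
  simp only [Rcurv, wedgeR, e2, e1, e3] at h1
  rw [g1, g2, g3, g4, g5, hx₀, g7, g8] at h1
  have hρX : ρ x₀ = c.im • (Complex.I • x₀) := by
    have h2 : (4:ℝ) • ρ x₀ = (4 * c.im) • (Complex.I • x₀) := by
      linear_combination (norm := module) (-1 : ℝ) • h1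
    have h3 : (4:ℝ) • ρ x₀ = (4:ℝ) • (c.im • (Complex.I • x₀)) := by
      rw [h2, smul_smul]
    exact smul_right_injective _ (by norm_num : (4:ℝ) ≠ 0) h3
  have him : c.im = 0 := by
    have hc2 : c = (c.im : ℂ) * (-Complex.I * 1) := by
      calc c = innerC n x₀ (ρ x₀) := hc
        _ = innerC n x₀ ((c.im : ℝ) • (Complex.I • x₀)) := by rw [← hρX]
        _ = (c.im : ℂ) * (-Complex.I * 1) := by
            rw [real_smul_vec, innerC_smul_right, innerC_smul_right, hXX]
            simp [Complex.conj_I]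
    have h4 := congrArg Complex.im hc2
    simp at h4
    linarith
  have hρX0 : ρ x₀ = 0 := by rw [hρX, him]; simp
  apply LinearMap.ext; intro Z
  have h3 := hR Z
  simp only [Rcurv, wedgeR, e2, hρX0, smul_zero, e1] at h3
  simp only [gR, innerC_zero_left, innerC_zero_right, innerC_neg_right, hXX, Complex.zero_re, mul_zero,
    Complex.one_re, Complex.neg_re, zero_smul, smul_zero, sub_zero, zero_sub,
    neg_zero, add_zero, zero_add, sub_self] at h3
  have h5 : (2 * (-1) : ℝ) • ρ Z = 0 := by
    linear_combination (norm := module) h3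
  have := smul_eq_zero.mp h5
  simp at this
  simpa using this
end
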